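/- Given a commutative ladder of abelian groups with exact rows A_i → B_i → C_i → D_i → E_i (with vertical maps from level i+1 to level i, for i ∈ ℤ_{≥0}): if (A_i) is a,b-surjective, (B_i) is a,c-injective, and (D_i) is (a+b),d-injective, then (C_i) is (a+b),(c+d)-injective. -/

import Mathlib

open CategoryTheory Opposite

/-- The transition map from level `j` to level `i` (for `i ≤ j`) of an inverse system of
abelian groups indexed by `ℕ`. -/
noncomputable def InvSys.trans (F : ℕᵒᵖ ⥤ AddCommGrpCat) {i j : ℕ} (h : i ≤ j) :
    F.obj (op j) → F.obj (op i) :=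
  F.map (homOfLE h).op

/-- `a,b`-injectivity of an inverse system of abelian groups. -/
def InvSys.IsInjective (F : ℕᵒᵖ ⥤ AddCommGrpCat) (a b : ℕ) : Prop :=
  ∀ c (_ : a ≤ c), ∀ x : F.obj (op (b + c)),
    InvSys.trans F (by omega : a ≤ b + c) x = 0 →
    InvSys.trans F (by omega : c ≤ b + c) x = 0

/-- `a,b`-surjectivity of an inverse system of abelian groups. -/
def InvSys.IsSurjective (F : ℕᵒᵖ ⥤ AddCommGrpCat) (a b : ℕ) : Prop :=
  ∀ c (_ : a ≤ c), ∀ x : F.obj (op c),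
    (∃ y : F.obj (op (b + c)), InvSys.trans F (by omega : c ≤ b + c) y = x) →
    ∀ d (_ : c ≤ d), ∃ z : F.obj (op d), InvSys.trans F (by omega : c ≤ d) z = x

lemma InvSys.trans_trans (F : ℕᵒᵖ ⥤ AddCommGrpCat) {i j k : ℕ} (hij : i ≤ j) (hjk : j ≤ k)
    (x : F.obj (op k)) :
    InvSys.trans F hij (InvSys.trans F hjk x) = InvSys.trans F (hij.trans hjk) x := by
  simp only [InvSys.trans]
  rw [← CategoryTheory.comp_apply, ← F.map_comp]
  rfl

lemma InvSys.trans_nat {F G : ℕᵒᵖ ⥤ AddCommGrpCat} (τ : F ⟶ G) {i j : ℕ} (h : i ≤ j)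
    (x : F.obj (op j)) :
    τ.app (op i) (InvSys.trans F h x) = InvSys.trans G h (τ.app (op j) x) := by
  simp only [InvSys.trans]
  rw [← CategoryTheory.comp_apply, τ.naturality, CategoryTheory.comp_apply]

lemma InvSys.trans_sub (F : ℕᵒᵖ ⥤ AddCommGrpCat) {i j : ℕ} (h : i ≤ j) (x y : F.obj (op j)) :
    InvSys.trans F h (x - y) = InvSys.trans F h x - InvSys.trans F h y :=
  (F.map (homOfLE h).op).hom.map_sub x y

lemma InvSys.trans_zero (F : ℕᵒᵖ ⥤ AddCommGrpCat) {i j : ℕ} (h : i ≤ j) :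
    InvSys.trans F h 0 = 0 :=
  (F.map (homOfLE h).op).hom.map_zero

/-- Generalized five lemma for inverse systems (injectivity part): given a commutative
ladder of inverse systems of abelian groups with exact rows
`A_i → B_i → C_i → D_i → E_i`, if `(A_i)` is `a,b`-surjective, `(B_i)` is `a,c`-injective and
`(D_i)` is `(a+b),d`-injective, then `(C_i)` is `(a+b),(c+d)`-injective. -/
theorem invSys_five_lemma_injective
    (A B C D E : ℕᵒᵖ ⥤ AddCommGrpCat)
    (α : A ⟶ B) (β : B ⟶ C) (γ : C ⟶ D) (δ : D ⟶ E)
    (hexB : ∀ i : ℕ, Function.Exact (α.app (op i)) (β.app (op i)))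
    (hexC : ∀ i : ℕ, Function.Exact (β.app (op i)) (γ.app (op i)))
    (hexD : ∀ i : ℕ, Function.Exact (γ.app (op i)) (δ.app (op i)))
    (a b c d : ℕ)
    (hA : InvSys.IsSurjective A a b)
    (hB : InvSys.IsInjective B a c)
    (hD : InvSys.IsInjective D (a + b) d) :
    InvSys.IsInjective C (a + b) (c + d) := by
  intro e he x hx
  -- x : C (c+d+e), hx : image of x in C (a+b) is 0
  -- Step 1: push x down to level d + (c + e) and apply γ
  set x' : C.obj (op (d + (c + e))) := InvSys.trans C (by omega : d + (c + e) ≤ c + d + e) x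
    with hx'
  have hγ0 : InvSys.trans D (by omega : a + b ≤ d + (c + e)) (γ.app _ x') = 0 := by
    rw [← InvSys.trans_nat γ, hx', InvSys.trans_trans]
    have : InvSys.trans C (by omega : a + b ≤ c + d + e) x = 0 := hx
    rw [this, map_zero]
  have hD1 := hD (c + e) (by omega) (γ.app _ x') hγ0
  -- at level c+e : γ kills the image of x
  set x₁ : C.obj (op (c + e)) := InvSys.trans C (by omega : c + e ≤ c + d + e) x with hx₁
  have hγx₁ : γ.app (op (c + e)) x₁ = 0 := by
    rw [hx₁, ← InvSys.trans_trans C (by omega : c + e ≤ d + (c + e))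
      (by omega : d + (c + e) ≤ c + d + e), ← hx', InvSys.trans_nat γ]
    exact hD1
  -- exactness at C : x₁ = β y
  obtain ⟨y, hy⟩ := ((hexC (c + e)) x₁).mp hγx₁
  -- image of y at level a+b comes from A
  have hβy : β.app (op (a + b)) (InvSys.trans B (by omega : a + b ≤ c + e) y) = 0 := by
    rw [InvSys.trans_nat β, hy, hx₁, InvSys.trans_trans]
    exact hx
  obtain ⟨z', hz'⟩ := ((hexB (a + b)) _).mp hβy
  -- use surjectivity of A to lift z'|_a to level c+e
  set z : A.obj (op a) := InvSys.trans A (by omega : a ≤ a + b) z' with hz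
  obtain ⟨w, hw⟩ := hA a le_rfl z
    ⟨InvSys.trans A (by omega : b + a ≤ a + b) z', by rw [InvSys.trans_trans]⟩
    (c + e) (by omega)
  -- the corrected element y - α w dies at level a
  have hu0 : InvSys.trans B (by omega : a ≤ c + e) (y - α.app _ w) = 0 := by
    rw [InvSys.trans_sub, ← InvSys.trans_nat α, hw, hz, InvSys.trans_nat α, hz',
      InvSys.trans_trans, sub_self]
  have hB1 := hB e (by omega) (y - α.app _ w) hu0
  -- conclude
  have : InvSys.trans C (by omega : e ≤ c + d + e) x
      = β.app (op e) (InvSys.trans B (by omega : e ≤ c + e) y) := by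
    rw [InvSys.trans_nat β, hy, hx₁, InvSys.trans_trans]
  rw [this]
  have hye : InvSys.trans B (by omega : e ≤ c + e) y
      = α.app (op e) (InvSys.trans A (by omega : e ≤ c + e) w) := by
    have := hB1
    rw [InvSys.trans_sub, ← InvSys.trans_nat α, sub_eq_zero] at this
    rw [this]
  rw [hye]
  exact (hexB e).apply_apply_eq_zero _
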